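/- arXiv:math/0611928 — 4 statements merged into one kernel-verified Lean document; each statement's English description precedes it below -/
import Mathlib

section
/- Let f be holomorphic on a neighborhood of the closed disk of radius R centered at 0, let z_0,...,z_n be points in the closed disk of radius r < R, and let L_n f be the Lagrange interpolating polynomial of f at these points (with multiplicity). Then for any 0 < s < R, the maximum of |f - L_n f| on the circle of radius s is at most M(R,f) * (R/(R-s)) * ((s+r)/(R-r))^{n+1}, where M(R,f) is the maximum of |f| on the circle of radius R. -/
open Metric
set_option maxHeartbeats 1000000

private lemma poly_norm_bound (L : Polynomial ℂ) (n : ℕ) (hL : L.degree ≤ (n : ℕ)) :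
    ∀ t : ℂ, 1 ≤ ‖t‖ →
      ‖L.eval t‖ ≤ (∑ i ∈ Finset.range (n+1), ‖L.coeff i‖) * ‖t‖ ^ n := by
  intro t ht
  have hnd : L.natDegree < n + 1 :=
    Nat.lt_succ_of_le (Polynomial.natDegree_le_iff_degree_le.2 hL)
  rw [Polynomial.eval_eq_sum_range' hnd, Finset.sum_mul]
  refine (norm_sum_le _ _).trans (Finset.sum_le_sum fun i hi => ?_)
  rw [norm_mul, norm_pow]
  exact mul_le_mul_of_nonneg_left
    (pow_le_pow_right₀ ht (Nat.lt_succ_iff.1 (Finset.mem_range.1 hi)))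
    (norm_nonneg _)

private lemma omega_lower (n : ℕ) (z : Fin (n+1) → ℂ) (r : ℝ)
    (hz : ∀ i, ‖z i‖ ≤ r) (t : ℂ) (ht : r ≤ ‖t‖) :
    (‖t‖ - r) ^ (n+1) ≤ ‖∏ i, (t - z i)‖ := by
  rw [norm_prod]
  calc (‖t‖ - r) ^ (n+1) = ∏ _i : Fin (n+1), (‖t‖ - r) := by
        simp [Finset.prod_const]
    _ ≤ ∏ i, ‖t - z i‖ := by
        refine Finset.prod_le_prod (fun i _ => by linarith) (fun i _ => ?_)
        have := hz i
        have := norm_sub_norm_le t (z i)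
        linarith

/-- Lagrange interpolation error estimate: if `f` is holomorphic on a neighborhood `U` of
the closed disk of radius `R`, `z₀,…,zₙ` lie in the closed disk of radius `r < R`, and
`L` is the Lagrange interpolating polynomial of `f` at these points with multiplicity
(i.e. `deg L ≤ n` and `f - L` is divisible by `∏ (z - zᵢ)` in the holomorphic functions
on `U`), then for `0 < s < R` and `|z| = s`,
`|f z - L z| ≤ M(R,f) · (R/(R-s)) · ((s+r)/(R-r))^{n+1}`. -/
theorem stmt_0 (f : ℂ → ℂ) (R r s : ℝ) (n : ℕ) (hr0 : 0 ≤ r) (hrR : r < R)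
    (hs0 : 0 < s) (hsR : s < R)
    (U : Set ℂ) (hU : IsOpen U) (hUR : closedBall (0 : ℂ) R ⊆ U)
    (hf : DifferentiableOn ℂ f U)
    (z : Fin (n + 1) → ℂ) (hz : ∀ i, z i ∈ closedBall (0 : ℂ) r)
    (L : Polynomial ℂ) (hL : L.degree ≤ (n : ℕ))
    (h : ℂ → ℂ) (hh : DifferentiableOn ℂ h U)
    (hfact : ∀ w ∈ U, f w - L.eval w = (∏ i, (w - z i)) * h w) :
    ∀ w ∈ sphere (0 : ℂ) s,
      ‖f w - L.eval w‖ ≤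
        sSup ((fun ζ => ‖f ζ‖) '' sphere (0 : ℂ) R) * (R / (R - s)) *
          ((s + r) / (R - r)) ^ (n + 1) := by
  intro w hw
  have hR0 : 0 < R := hs0.trans hsR
  have hw' : ‖w‖ = s := by simpa using hw
  have hzi : ∀ i, ‖z i‖ ≤ r := fun i => by simpa using hz i
  set ω : ℂ → ℂ := fun t => ∏ i, (t - z i) with hωdef
  have hfact' : ∀ t ∈ U, f t - L.eval t = ω t * h t := hfact
  set M := sSup ((fun ζ => ‖f ζ‖) '' sphere (0 : ℂ) R) with hMdef
  -- basic facts about M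
  have hfc : ContinuousOn f (sphere (0:ℂ) R) :=
    hf.continuousOn.mono ((sphere_subset_closedBall).trans hUR)
  have hcpt : IsCompact ((fun ζ => ‖f ζ‖) '' sphere (0 : ℂ) R) :=
    (isCompact_sphere 0 R).image_of_continuousOn (continuous_norm.comp_continuousOn hfc)
  have hMb : ∀ t ∈ sphere (0:ℂ) R, ‖f t‖ ≤ M := fun t ht =>
    le_csSup hcpt.bddAbove (Set.mem_image_of_mem _ ht)
  have hRs : (R : ℂ) ∈ sphere (0:ℂ) R := by
    simp [Complex.norm_real, abs_of_pos hR0]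
  have hM0 : 0 ≤ M := le_trans (norm_nonneg _) (hMb _ hRs)
  -- ω nonvanishing and differentiability facts
  have hωne : ∀ t : ℂ, r < ‖t‖ → ω t ≠ 0 := by
    intro t ht
    refine Finset.prod_ne_zero_iff.2 fun i _ => sub_ne_zero.2 fun he => ?_
    rw [he] at ht; exact absurd (hzi i) (not_le.2 ht)
  have hωdiff : Differentiable ℂ ω := by
    refine Differentiable.fun_finsetProd fun i _ => ?_
    exact differentiable_id.sub_const _
  -- h value formula on U minus zeros of ω
  have hval : ∀ t : ℂ, t ∈ U → ω t ≠ 0 → h t = (f t - L.eval t) / ω t := by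
    intro t htU hne
    rw [eq_div_iff hne, hfact' t htU]
    ring
  -- the "L-part" integrand
  set G : ℂ → ℂ := fun t => L.eval t / (ω t * (t - w)) with hGdef
  have hGdiff : ∀ t : ℂ, max r s < ‖t‖ → DifferentiableAt ℂ G t := by
    intro t ht
    have h1 : r < ‖t‖ := lt_of_le_of_lt (le_max_left _ _) ht
    have h2 : s < ‖t‖ := lt_of_le_of_lt (le_max_right _ _) ht
    have htw : t - w ≠ 0 := sub_ne_zero.2 fun he => by
      rw [he, hw'] at h2; exact lt_irrefl _ h2
    exact (L.differentiableAt).div ((hωdiff t).mul (differentiableAt_id.sub_const _))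
      (mul_ne_zero (hωne t h1) htw)
  -- the integral of G over C(0,ρ) is the same for all ρ ≥ R
  have hGcont : ∀ ρ : ℝ, R ≤ ρ → ContinuousOn G (sphere (0:ℂ) ρ) := by
    intro ρ hρ t ht
    have ht' : ‖t‖ = ρ := by exact mem_sphere_zero_iff_norm.1 ht
    have : max r s < ‖t‖ := by
      rw [ht']; exact lt_of_lt_of_le (max_lt hrR hsR) hρ
    exact ((hGdiff t this).continuousAt).continuousWithinAt
  have heq : ∀ ρ : ℝ, R ≤ ρ →
      (∮ t in C((0:ℂ), ρ), G t) = ∮ t in C((0:ℂ), R), G t := by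
    intro ρ hρ
    refine Complex.circleIntegral_eq_of_differentiable_on_annulus_off_countable hR0 hρ
      Set.countable_empty ?_ ?_
    · intro t ht
      have h2 : t ∉ ball (0:ℂ) R := ht.2
      have ht' : R ≤ ‖t‖ := by
        by_contra hcon
        exact h2 (mem_ball_zero_iff.2 (lt_of_not_ge hcon))
      have : max r s < ‖t‖ := lt_of_lt_of_le (max_lt hrR hsR) ht'
      exact ((hGdiff t this).continuousAt).continuousWithinAt
    · intro t ht
      have h2 : t ∉ closedBall (0:ℂ) R := ht.1.2
      have ht' : R ≤ ‖t‖ := by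
        by_contra hcon
        exact h2 (mem_closedBall_zero_iff.2 (le_of_not_gt (fun hlt => hcon hlt.le)))
      exact hGdiff t (lt_of_lt_of_le (max_lt hrR hsR) ht')
  -- decay bound
  set Cp := ∑ i ∈ Finset.range (n+1), ‖L.coeff i‖ with hCp
  have hCp0 : 0 ≤ Cp := Finset.sum_nonneg fun _ _ => norm_nonneg _
  have hbound : ∀ ρ : ℝ, max (max R 1) (2 * max r s) ≤ ρ →
      ‖∮ t in C((0:ℂ), R), G t‖ ≤ 2 * Real.pi * (Cp * 2^(n+2)) / ρ := by
    intro ρ hρ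
    have hρR : R ≤ ρ := le_trans (le_trans (le_max_left _ _) (le_max_left _ _)) hρ
    have hρ1 : (1:ℝ) ≤ ρ := le_trans (le_trans (le_max_right _ _) (le_max_left _ _)) hρ
    have hρ0 : 0 < ρ := lt_of_lt_of_le one_pos hρ1
    have hρr : r ≤ ρ / 2 := by
      have := le_trans (le_max_right _ _) hρ
      have := le_max_left r s
      linarith
    have hρs : s ≤ ρ / 2 := by
      have := le_trans (le_max_right _ _) hρ
      have := le_max_right r s
      linarith
    rw [← heq ρ hρR]
    have key : ∀ t ∈ sphere (0:ℂ) ρ, ‖G t‖ ≤ Cp * 2^(n+2) / ρ^2 := by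
      intro t ht
      have ht' : ‖t‖ = ρ := by exact mem_sphere_zero_iff_norm.1 ht
      have hnum : ‖L.eval t‖ ≤ Cp * ρ^n := by
        have := poly_norm_bound L n hL t (by rw [ht']; exact hρ1)
        rwa [ht'] at this
      have hden : (ρ/2)^(n+2) ≤ ‖ω t * (t - w)‖ := by
        rw [norm_mul]
        have h1 : (ρ/2)^(n+1) ≤ ‖ω t‖ := by
          refine le_trans ?_ (omega_lower n z r hzi t (by rw [ht']; linarith))
          refine pow_le_pow_left₀ (by linarith) ?_ _
          rw [ht']; linarith
        have h2 : ρ/2 ≤ ‖t - w‖ := by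
          have := norm_sub_norm_le t w
          rw [ht', hw'] at this
          linarith
        calc (ρ/2)^(n+2) = (ρ/2)^(n+1) * (ρ/2) := by ring
          _ ≤ ‖ω t‖ * ‖t - w‖ := by
              refine mul_le_mul h1 h2 (by linarith) (norm_nonneg _)
      have hdenpos : (0:ℝ) < (ρ/2)^(n+2) := by positivity
      have step : ‖G t‖ ≤ (Cp * ρ^n) / ((ρ/2)^(n+2)) := by
        simp only [hGdef, norm_div]
        refine div_le_div₀ (mul_nonneg hCp0 (by positivity)) hnum hdenpos hden
      refine step.trans (le_of_eq ?_)
      rw [div_pow, div_div_eq_mul_div, div_eq_div_iff (by positivity) (by positivity)]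
      ring
    have hρne : ρ ≠ 0 := hρ0.ne'
    calc ‖∮ t in C((0:ℂ), ρ), G t‖ ≤ 2 * Real.pi * ρ * (Cp * 2^(n+2) / ρ^2) :=
          circleIntegral.norm_integral_le_of_norm_le_const hρ0.le key
      _ = 2 * Real.pi * (Cp * 2^(n+2)) / ρ := by
          field_simp
  -- conclude the L-part integral vanishes
  have hGzero : (∮ t in C((0:ℂ), R), G t) = 0 := by
    have htend : Filter.Tendsto (fun ρ : ℝ => 2 * Real.pi * (Cp * 2^(n+2)) / ρ)
        Filter.atTop (nhds 0) :=
      Filter.Tendsto.div_atTop tendsto_const_nhds Filter.tendsto_id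
    have hle : ‖∮ t in C((0:ℂ), R), G t‖ ≤ 0 := by
      refine ge_of_tendsto htend ?_
      filter_upwards [Filter.eventually_ge_atTop (max (max R 1) (2 * max r s))] with ρ hρ
      exact hbound ρ hρ
    exact norm_le_zero_iff.1 hle
  -- Cauchy integral formula for h
  have hwball : w ∈ ball (0:ℂ) R := mem_ball_zero_iff.2 (by rw [hw']; exact hsR)
  have hdcc : DiffContOnCl ℂ h (ball (0:ℂ) R) := by
    refine DifferentiableOn.diffContOnCl ?_
    rw [closure_ball (0:ℂ) hR0.ne']
    exact hh.mono hUR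
  have hcauchy : (∮ t in C((0:ℂ), R), (t - w)⁻¹ • h t) = (2 * Real.pi * Complex.I : ℂ) • h w :=
    hdcc.circleIntegral_sub_inv_smul hwball
  -- rewrite integrand on the sphere
  set F : ℂ → ℂ := fun t => f t / (ω t * (t - w)) with hFdef
  have hFcont : ContinuousOn F (sphere (0:ℂ) R) := by
    refine ContinuousOn.div hfc ?_ ?_
    · exact ((hωdiff.continuous.comp continuous_id).continuousOn.mul
        ((continuous_id.sub continuous_const).continuousOn))
    · intro t ht
      have ht' : ‖t‖ = R := by exact mem_sphere_zero_iff_norm.1 ht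
      have htw : t - w ≠ 0 := sub_ne_zero.2 fun he => by
        rw [← he, ht'] at hw'; exact absurd hw' (ne_of_gt hsR)
      exact mul_ne_zero (hωne t (by rw [ht']; exact hrR)) htw
  have hintegrand : ∀ t ∈ sphere (0:ℂ) R, (t - w)⁻¹ • h t = F t - G t := by
    intro t ht
    have ht' : ‖t‖ = R := by exact mem_sphere_zero_iff_norm.1 ht
    have htU : t ∈ U := hUR (sphere_subset_closedBall ht)
    have hωt : ω t ≠ 0 := hωne t (by rw [ht']; exact hrR)
    have htw : t - w ≠ 0 := sub_ne_zero.2 fun he => by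
      rw [← he, ht'] at hw'; exact absurd hw' (ne_of_gt hsR)
    rw [hval t htU hωt]
    simp only [hFdef, hGdef, smul_eq_mul]
    rw [inv_mul_eq_div, ← sub_div, div_mul_eq_div_div, sub_div]
  have hsplit : (∮ t in C((0:ℂ), R), (t - w)⁻¹ • h t)
      = (∮ t in C((0:ℂ), R), F t) - ∮ t in C((0:ℂ), R), G t := by
    rw [← circleIntegral.integral_sub (hFcont.circleIntegrable hR0.le)
      ((hGcont R le_rfl).circleIntegrable hR0.le)]
    exact circleIntegral.integral_congr hR0.le hintegrand
  have hmain : (2 * Real.pi * Complex.I : ℂ) • h w = ∮ t in C((0:ℂ), R), F t := by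
    rw [← hcauchy, hsplit, hGzero, sub_zero]
  -- norm estimate for the F integral
  have hFbound : ∀ t ∈ sphere (0:ℂ) R, ‖F t‖ ≤ M / ((R - r)^(n+1) * (R - s)) := by
    intro t ht
    have ht' : ‖t‖ = R := by exact mem_sphere_zero_iff_norm.1 ht
    have hden : (R - r)^(n+1) * (R - s) ≤ ‖ω t * (t - w)‖ := by
      rw [norm_mul]
      have h1 : (R - r)^(n+1) ≤ ‖ω t‖ := by
        have := omega_lower n z r hzi t (by rw [ht']; linarith)
        rwa [ht'] at this
      have h2 : R - s ≤ ‖t - w‖ := by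
        have := norm_sub_norm_le t w
        rw [ht', hw'] at this
        linarith
      exact mul_le_mul h1 h2 (by linarith) (norm_nonneg _)
    rw [hFdef]
    simp only [norm_div]
    have hd1 : (0:ℝ) < R - r := by linarith
    have hd2 : (0:ℝ) < R - s := by linarith
    exact div_le_div₀ hM0 (hMb t ht) (by positivity) hden
  have hFint : ‖∮ t in C((0:ℂ), R), F t‖
      ≤ 2 * Real.pi * R * (M / ((R - r)^(n+1) * (R - s))) := by
    exact circleIntegral.norm_integral_le_of_norm_le_const hR0.le hFbound
  -- bound ‖h w‖
  have hnorm2pi : ‖(2 * Real.pi * Complex.I : ℂ)‖ = 2 * Real.pi := by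
    simp [norm_mul]
    positivity
  have hhw : ‖h w‖ ≤ R * M / ((R - r)^(n+1) * (R - s)) := by
    have h1 : 2 * Real.pi * ‖h w‖ ≤ 2 * Real.pi * R * (M / ((R - r)^(n+1) * (R - s))) := by
      calc 2 * Real.pi * ‖h w‖ = ‖(2 * Real.pi * Complex.I : ℂ) • h w‖ := by
            rw [norm_smul, hnorm2pi]
        _ = ‖∮ t in C((0:ℂ), R), F t‖ := by rw [hmain]
        _ ≤ _ := hFint
    have hpi : (0:ℝ) < 2 * Real.pi := by positivity
    have h2 : 2 * Real.pi * ‖h w‖ ≤ 2 * Real.pi * (R * M / ((R - r)^(n+1) * (R - s))) :=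
      h1.trans_eq (by ring)
    exact le_of_mul_le_mul_left h2 hpi
  -- bound ‖ω w‖
  have hωw : ‖ω w‖ ≤ (s + r)^(n+1) := by
    rw [hωdef]
    simp only
    rw [norm_prod]
    calc ∏ i, ‖w - z i‖ ≤ ∏ _i : Fin (n+1), (s + r) := by
          refine Finset.prod_le_prod (fun i _ => norm_nonneg _) (fun i _ => ?_)
          calc ‖w - z i‖ ≤ ‖w‖ + ‖z i‖ := norm_sub_le _ _
            _ ≤ s + r := by rw [hw']; linarith [hzi i]
      _ = (s + r)^(n+1) := by simp [Finset.prod_const]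
  -- put it together
  have hwU : w ∈ U := hUR (mem_closedBall_zero_iff.2 (by rw [hw']; exact hsR.le))
  rw [hfact w hwU, norm_mul]
  calc ‖ω w‖ * ‖h w‖ ≤ (s + r)^(n+1) * (R * M / ((R - r)^(n+1) * (R - s))) := by
        refine mul_le_mul hωw hhw (norm_nonneg _) (by positivity)
    _ = M * (R / (R - s)) * ((s + r) / (R - r)) ^ (n + 1) := by
        rw [div_pow]
        have h1 : R - r > 0 := by linarith
        have h2 : R - s > 0 := by linarith
        field_simp
end

section
/- Let f be a germ of a holomorphic function at the origin and m a natural number. If for all n ≥ k there exist rational functions R_n = P_n/Q_n with deg P_n ≤ n, deg Q_n ≤ m, Q_n ≠ 0, such that f - R_n vanishes to order at least n + m + 2 at the origin, then f itself equals a rational function P/Q with deg P ≤ k and deg Q ≤ m. -/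
open PowerSeries

private lemma polyZero (R : Polynomial ℂ) (d : ℕ) (hd : R.degree ≤ (d : ℕ))
    (hc : ∀ j : ℕ, j < d + 1 → R.coeff j = 0) : R = 0 := by
  ext j
  rcases lt_or_ge j (d + 1) with hj | hj
  · simpa using hc j hj
  · simp only [Polynomial.coeff_zero]
    refine Polynomial.coeff_eq_zero_of_degree_lt (lt_of_le_of_lt hd ?_)
    exact_mod_cast (by omega : d < j)

private lemma mulvanish (Q g : PowerSeries ℂ) (N : ℕ)
    (hg : ∀ j : ℕ, j < N → (PowerSeries.coeff j) g = 0) :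
    ∀ j : ℕ, j < N → (PowerSeries.coeff j) (Q * g) = 0 := by
  intro j hj
  rw [PowerSeries.coeff_mul]
  apply Finset.sum_eq_zero
  intro x hx
  replace hx : x.1 + x.2 = j := by simpa using hx
  rw [hg x.2 (by omega), mul_zero]

/-- Padé overinterpolation: if `f` is a holomorphic germ at the origin (viewed via its
power series) and for every `n ≥ k` there are polynomials `Pₙ, Qₙ` with `deg Pₙ ≤ n`,
`deg Qₙ ≤ m`, `Qₙ ≠ 0`, such that `Qₙ f - Pₙ` vanishes to order at least `n + m + 2`
at the origin, then `f` equals a rational function `P/Q` with `deg P ≤ k`, `deg Q ≤ m`. -/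
theorem stmt_1 (f : PowerSeries ℂ) (k m : ℕ)
    (h : ∀ n : ℕ, k ≤ n → ∃ P Q : Polynomial ℂ, P.degree ≤ (n : ℕ) ∧
      Q.degree ≤ (m : ℕ) ∧ Q ≠ 0 ∧
      ∀ j : ℕ, j < n + m + 2 → (PowerSeries.coeff j) ((Q : PowerSeries ℂ) * f - (P : PowerSeries ℂ)) = 0) :
    ∃ P Q : Polynomial ℂ, P.degree ≤ (k : ℕ) ∧ Q.degree ≤ (m : ℕ) ∧ Q ≠ 0 ∧
      (Q : PowerSeries ℂ) * f = (P : PowerSeries ℂ) := by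
  choose P Q hP hQ hQ0 hv using fun t : ℕ => h (k + t) (Nat.le_add_right k t)
  -- consecutive approximants agree as rational functions
  have key : ∀ t : ℕ, Q (t + 1) * P t = Q t * P (t + 1) := by
    intro t
    have hz : Q (t + 1) * P t - Q t * P (t + 1) = 0 := by
      apply polyZero _ (m + (k + t) + 1)
      · refine le_trans (Polynomial.degree_sub_le _ _) (max_le ?_ ?_)
        · refine le_trans (Polynomial.degree_mul_le _ _) ?_
          refine le_trans (add_le_add (hQ (t + 1)) (hP t)) ?_
          rw [← Nat.cast_add]
          exact_mod_cast (by omega : m + (k + t) ≤ m + (k + t) + 1)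
        · refine le_trans (Polynomial.degree_mul_le _ _) ?_
          refine le_trans (add_le_add (hQ t) (hP (t + 1))) ?_
          rw [← Nat.cast_add]
          exact_mod_cast (by omega : m + (k + (t + 1)) ≤ m + (k + t) + 1)
      · intro j hj
        have hcoe : ((Q (t + 1) * P t - Q t * P (t + 1) : Polynomial ℂ) : PowerSeries ℂ)
            = (Q t : PowerSeries ℂ) * ((Q (t + 1) : PowerSeries ℂ) * f - (P (t + 1) : PowerSeries ℂ))
              - (Q (t + 1) : PowerSeries ℂ) * ((Q t : PowerSeries ℂ) * f - (P t : PowerSeries ℂ)) := by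
          push_cast
          ring
        have := congrArg (PowerSeries.coeff j) hcoe
        rw [Polynomial.coeff_coe] at this
        rw [this, map_sub,
          mulvanish _ _ _ (hv (t + 1)) j (by omega),
          mulvanish _ _ _ (hv t) j (by omega), sub_zero]
    have := sub_eq_zero.mp hz
    exact this
  -- all approximants agree with the first one
  have chain : ∀ t : ℕ, Q 0 * P t = Q t * P 0 := by
    intro t
    induction t with
    | zero => ring
    | succ t ih =>
      apply mul_left_cancel₀ (hQ0 t)
      calc Q t * (Q 0 * P (t + 1)) = Q 0 * (Q t * P (t + 1)) := by ring
        _ = Q 0 * (Q (t + 1) * P t) := by rw [key t]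
        _ = Q (t + 1) * (Q 0 * P t) := by ring
        _ = Q (t + 1) * (Q t * P 0) := by rw [ih]
        _ = Q t * (Q (t + 1) * P 0) := by ring
  refine ⟨P 0, Q 0, by simpa using hP 0, hQ 0, hQ0 0, ?_⟩
  rw [← sub_eq_zero]
  ext j
  simp only [map_zero]
  by_contra hc
  -- relate Q j * (Q 0 f - P 0) to Q 0 * (Q j f - P j)
  have hpc : (Q 0 : PowerSeries ℂ) * (P j : PowerSeries ℂ)
      = (Q j : PowerSeries ℂ) * (P 0 : PowerSeries ℂ) := by
    rw [← Polynomial.coe_mul, ← Polynomial.coe_mul, chain j]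
  have hrel : (Q j : PowerSeries ℂ) * ((Q 0 : PowerSeries ℂ) * f - (P 0 : PowerSeries ℂ))
      = (Q 0 : PowerSeries ℂ) * ((Q j : PowerSeries ℂ) * f - (P j : PowerSeries ℂ)) := by
    linear_combination hpc
  have hvan : ∀ i : ℕ, i < k + j + m + 2 →
      (PowerSeries.coeff i)
        ((Q j : PowerSeries ℂ) * ((Q 0 : PowerSeries ℂ) * f - (P 0 : PowerSeries ℂ))) = 0 := by
    rw [hrel]
    exact mulvanish _ _ _ (hv j)
  set g0 : PowerSeries ℂ := (Q 0 : PowerSeries ℂ) * f - (P 0 : PowerSeries ℂ) with hg0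
  set φ : PowerSeries ℂ := (Q j : PowerSeries ℂ) * g0 with hφ
  have hQjne : ((Q j : PowerSeries ℂ)) ≠ 0 := by
    simpa using hQ0 j
  have hg0ne : g0 ≠ 0 := by
    intro hz
    rw [hz] at hc
    simp at hc
  have hφne : φ ≠ 0 := mul_ne_zero hQjne hg0ne
  have hordQ : PowerSeries.order ((Q j : PowerSeries ℂ)) ≤ (m : ℕ∞) := by
    have hle : (Q j).natDegree ≤ m := Polynomial.natDegree_le_iff_degree_le.mpr (hQ j)
    refine le_trans (PowerSeries.order_le (Q j).natDegree ?_) (by exact_mod_cast hle)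
    rw [Polynomial.coeff_coe]
    exact Polynomial.leadingCoeff_ne_zero.mpr (hQ0 j)
  have hordg : PowerSeries.order g0 ≤ (j : ℕ∞) := PowerSeries.order_le j hc
  have hordφ : PowerSeries.order φ ≤ ((m + j : ℕ) : ℕ∞) := by
    rw [hφ, PowerSeries.order_mul]
    push_cast
    exact add_le_add hordQ hordg
  have hlt : PowerSeries.order φ < ⊤ := PowerSeries.order_finite_iff_ne_zero.mpr hφne
  have hco := PowerSeries.coeff_order hφne
  rw [← ENat.lift_eq_toNat_of_lt_top hlt] at hco
  have hdl : ((φ.order.lift hlt : ℕ) : ℕ∞) = φ.order := by simp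
  have hdlt : (φ.order.lift hlt : ℕ) < k + j + m + 2 := by
    have : ((φ.order.lift hlt : ℕ) : ℕ∞) ≤ ((m + j : ℕ) : ℕ∞) := by rw [hdl]; exact hordφ
    have := Nat.cast_le.mp this
    omega
  exact hco (hvan _ hdlt)
end

section
/- Let S be an infinite subset of ℂ² such that there exist constants A ≥ 1 and 1 ≤ α < 2 with |S ∩ X| ≤ A·(deg X)^α for every algebraic curve X not containing S. Then S is contained in an irreducible algebraic curve Γ of degree at most (2A)^{1/(2-α)}, and consequently |S ∩ X| ≤ (2A)^{1/(2-α)}·deg X for every algebraic curve X not containing S. -/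
open MvPolynomial

noncomputable section stmt5aux

local notation "RR" => MvPolynomial (Fin 2) ℂ

def φv (x : ℂ × ℂ) : Fin 2 → ℂ := fun i : Fin 2 => if i = 0 then x.1 else x.2

def Zs (p : RR) : Set (ℂ × ℂ) := {x : ℂ × ℂ | MvPolynomial.eval (φv x) p = 0}

lemma degsum (f : Fin 2 →₀ ℕ) : (f.sum fun _ e => e) = f 0 + f 1 := by
  rw [Finsupp.sum_fintype]
  · exact Fin.sum_univ_two f
  · intro _; rfl

lemma exists_top_monomial {u : RR} (hu : u ≠ 0) :
    ∃ d ∈ u.support, (d 0 + d 1 = u.totalDegree) ∧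
      ∀ d' ∈ u.support, d' 0 + d' 1 = u.totalDegree → d' 0 ≤ d 0 := by
  classical
  have hsupp : u.support.Nonempty := MvPolynomial.support_nonempty.mpr hu
  obtain ⟨d₀, hd₀, hdeg₀⟩ := Finset.exists_mem_eq_sup u.support hsupp (fun s => s.sum fun _ e => e)
  set F := u.support.filter (fun d => d 0 + d 1 = u.totalDegree) with hF
  have hFne : F.Nonempty := by
    refine ⟨d₀, Finset.mem_filter.mpr ⟨hd₀, ?_⟩⟩
    rw [← degsum, ← hdeg₀]; rfl
  obtain ⟨d, hd, hmax⟩ := Finset.exists_max_image F (fun d => d 0) hFne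
  rw [Finset.mem_filter] at hd
  exact ⟨d, hd.1, hd.2, fun d' hd' hdeg' => hmax d' (Finset.mem_filter.mpr ⟨hd', hdeg'⟩)⟩

lemma totalDegree_mul_eq {u v : RR} (hu : u ≠ 0) (hv : v ≠ 0) :
    (u * v).totalDegree = u.totalDegree + v.totalDegree := by
  classical
  refine le_antisymm (totalDegree_mul u v) ?_
  obtain ⟨d, hd, hdeg, hmax⟩ := exists_top_monomial hu
  obtain ⟨e, he, hedeg, hemax⟩ := exists_top_monomial hv
  have hco : (u * v).coeff (d + e) = u.coeff d * v.coeff e := by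
    rw [coeff_mul]
    refine Finset.sum_eq_single_of_mem (d, e) (Finset.HasAntidiagonal.mem_antidiagonal.mpr rfl) ?_
    intro ab hab hne
    rw [Finset.HasAntidiagonal.mem_antidiagonal] at hab
    by_contra h0
    have ha : ab.1 ∈ u.support := by
      rw [mem_support_iff]; intro h; exact h0 (by rw [h, zero_mul])
    have hb : ab.2 ∈ v.support := by
      rw [mem_support_iff]; intro h; exact h0 (by rw [h, mul_zero])
    have hda : ab.1 0 + ab.1 1 ≤ u.totalDegree := by
      rw [← degsum]; exact le_totalDegree ha
    have hdb : ab.2 0 + ab.2 1 ≤ v.totalDegree := by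
      rw [← degsum]; exact le_totalDegree hb
    have h0s : ab.1 0 + ab.2 0 = d 0 + e 0 := by
      have := congrArg (fun f : Fin 2 →₀ ℕ => f 0) hab; simpa using this
    have h1s : ab.1 1 + ab.2 1 = d 1 + e 1 := by
      have := congrArg (fun f : Fin 2 →₀ ℕ => f 1) hab; simpa using this
    have hta : ab.1 0 + ab.1 1 = u.totalDegree := by omega
    have htb : ab.2 0 + ab.2 1 = v.totalDegree := by omega
    have hma := hmax ab.1 ha hta
    have hmb := hemax ab.2 hb htb
    have he1 : ab.1 0 = d 0 := by omega
    have he2 : ab.1 1 = d 1 := by omega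
    have hab1 : ab.1 = d := by
      ext i; fin_cases i
      · exact he1
      · exact he2
    have hab2 : ab.2 = e := by
      have := hab
      rw [hab1] at this
      exact add_left_cancel this
    exact hne (Prod.ext hab1 hab2)
  have hne : (u * v).coeff (d + e) ≠ 0 := by
    rw [hco]
    exact mul_ne_zero (mem_support_iff.mp hd) (mem_support_iff.mp he)
  have hmem : (d + e) ∈ (u * v).support := mem_support_iff.mpr hne
  have := le_totalDegree hmem
  rw [degsum] at this
  simp only [Finsupp.add_apply] at this
  omega

lemma totalDegree_dvd_le {q r : RR} (h : q ∣ r) (hr : r ≠ 0) :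
    q.totalDegree ≤ r.totalDegree := by
  obtain ⟨t, rfl⟩ := h
  have hq : q ≠ 0 := fun h0 => hr (by rw [h0, zero_mul])
  have ht : t ≠ 0 := fun h0 => hr (by rw [h0, mul_zero])
  rw [totalDegree_mul_eq hq ht]
  exact Nat.le_add_right _ _

/-- Dimension count : `D n = (n+1)(n+2)/2`. -/
def Dd (n : ℕ) : ℕ := (n + 1) * (n + 2) / 2

lemma two_Dd (n : ℕ) : 2 * Dd n = (n + 1) * (n + 2) := by
  have h : 2 ∣ (n + 1) * (n + 2) := (Nat.even_mul_succ_self (n + 1)).two_dvd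
  rw [Dd, Nat.mul_div_cancel' h]

def Gn (n : ℕ) : Finset (ℕ × ℕ) := (Finset.range (n + 1)).biUnion fun j => Finset.HasAntidiagonal.antidiagonal j

lemma mem_Gn {n : ℕ} {q : ℕ × ℕ} : q ∈ Gn n ↔ q.1 + q.2 ≤ n := by
  simp only [Gn, Finset.mem_biUnion, Finset.mem_range, Finset.HasAntidiagonal.mem_antidiagonal]
  constructor
  · rintro ⟨j, hj, hq⟩; omega
  · intro h; exact ⟨q.1 + q.2, by omega, rfl⟩

lemma gauss (n : ℕ) : 2 * ∑ j ∈ Finset.range n, (j + 1) = n * (n + 1) := by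
  induction n with
  | zero => simp
  | succ k ih =>
    rw [Finset.sum_range_succ, Nat.mul_add, ih]
    ring

lemma card_Gn (n : ℕ) : (Gn n).card = Dd n := by
  classical
  have hdisj : ∀ x ∈ Finset.range (n + 1), ∀ y ∈ Finset.range (n + 1), x ≠ y →
      Disjoint (Finset.HasAntidiagonal.antidiagonal x) (Finset.HasAntidiagonal.antidiagonal y) := by
    intro x _ y _ hxy
    rw [Finset.disjoint_left]
    intro a ha hb
    rw [Finset.HasAntidiagonal.mem_antidiagonal] at ha hb
    exact hxy (ha ▸ hb)
  have h1 : (Gn n).card = ∑ j ∈ Finset.range (n + 1), (j + 1) := by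
    rw [Gn, Finset.card_biUnion hdisj]
    simp [Finset.Nat.card_antidiagonal]
  have h2 := gauss (n + 1)
  have h3 := two_Dd n
  have h4 : (n + 1) * (n + 1 + 1) = (n + 1) * (n + 2) := by ring
  omega

def eqvFun (n : ℕ) :
    {s : Fin 2 →₀ ℕ // (s.sum fun _ e => e) ≤ n} ≃ {q : ℕ × ℕ // q ∈ Gn n} where
  toFun s := ⟨(s.1 0, s.1 1), by rw [mem_Gn]; have := s.2; rwa [degsum] at this⟩
  invFun q := ⟨Finsupp.single (0 : Fin 2) q.1.1 + Finsupp.single (1 : Fin 2) q.1.2, by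
    rw [degsum]
    have := mem_Gn.mp q.2
    simp only [Finsupp.add_apply, Finsupp.single_apply]
    norm_num
    omega⟩
  left_inv s := by
    apply Subtype.ext
    ext i
    fin_cases i <;> simp [Finsupp.single_apply]
  right_inv q := by
    apply Subtype.ext
    apply Prod.ext <;> simp [Finsupp.single_apply]

lemma finrank_W (n : ℕ) :
    Module.finrank ℂ (restrictTotalDegree (Fin 2) ℂ n) = Dd n := by
  classical
  rw [show restrictTotalDegree (Fin 2) ℂ n =
      restrictSupport ℂ {s : Fin 2 →₀ ℕ | (s.sum fun _ e => e) ≤ n} from rfl,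
    Module.finrank_eq_nat_card_basis
    (basisRestrictSupport ℂ {s : Fin 2 →₀ ℕ | (s.sum fun _ e => e) ≤ n})]
  rw [Nat.card_congr ((((Equiv.subtypeEquivRight (fun _ => Iff.rfl)).trans (eqvFun n))) :
      ↑{s : Fin 2 →₀ ℕ | (s.sum fun _ e => e) ≤ n} ≃ {q : ℕ × ℕ // q ∈ Gn n})]
  rw [Nat.card_eq_finsetCard (Gn n)]
  exact card_Gn n

abbrev Wd (j : ℕ) : Submodule ℂ (MvPolynomial (Fin 2) ℂ) := restrictTotalDegree (Fin 2) ℂ j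

lemma mem_Wd {j : ℕ} {q : MvPolynomial (Fin 2) ℂ} : q ∈ Wd j ↔ q.totalDegree ≤ j :=
  mem_restrictTotalDegree _ _ _

/-- Evaluation at the points of `T` as a linear map. -/
def evL (T : Finset (ℂ × ℂ)) : MvPolynomial (Fin 2) ℂ →ₗ[ℂ] ({t // t ∈ T} → ℂ) where
  toFun p := fun t => MvPolynomial.eval (φv t.1) p
  map_add' a b := by funext t; simp
  map_smul' c a := by funext t; simp [smul_eq_C_mul]

lemma evL_apply (T : Finset (ℂ × ℂ)) (p : MvPolynomial (Fin 2) ℂ) (t : {t // t ∈ T}) :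
    evL T p t = MvPolynomial.eval (φv t.1) p := rfl

/-- A linear polynomial vanishing at `s` but not at `t` (for `s ≠ t`). -/
def lf (s t : ℂ × ℂ) : MvPolynomial (Fin 2) ℂ :=
  if s.1 = t.1 then X 1 - C s.2 else X 0 - C s.1

lemma lf_deg (s t : ℂ × ℂ) : (lf s t).totalDegree ≤ 1 := by
  have h1 : ∀ i : Fin 2, ∀ c : ℂ, (X i - C c : MvPolynomial (Fin 2) ℂ).totalDegree ≤ 1 := by
    intro i c
    rw [sub_eq_add_neg]
    refine le_trans (totalDegree_add _ _) ?_
    rw [totalDegree_neg, totalDegree_X, totalDegree_C]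
    simp
  unfold lf
  split <;> apply h1

lemma lf_eval (s t u : ℂ × ℂ) :
    MvPolynomial.eval (φv u) (lf s t) = if s.1 = t.1 then u.2 - s.2 else u.1 - s.1 := by
  unfold lf
  split <;> simp [φv]

lemma lf_vanish (s t : ℂ × ℂ) : MvPolynomial.eval (φv s) (lf s t) = 0 := by
  rw [lf_eval]; split <;> ring

lemma lf_ne (s t : ℂ × ℂ) (h : s ≠ t) : MvPolynomial.eval (φv t) (lf s t) ≠ 0 := by
  rw [lf_eval]
  split_ifs with h1
  · intro h2; exact h (Prod.ext h1 (sub_eq_zero.mp h2).symm)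
  · intro h2; exact h1 (sub_eq_zero.mp h2).symm

/-- Interpolation with prescribed values. -/
lemma surj_ev (T : Finset (ℂ × ℂ)) (n : ℕ) (hn : T.card ≤ n + 1) (w : {t // t ∈ T} → ℂ) :
    ∃ P : MvPolynomial (Fin 2) ℂ, P.totalDegree ≤ n ∧
      ∀ t : {t // t ∈ T}, MvPolynomial.eval (φv t.1) P = w t := by
  classical
  set f : {t // t ∈ T} → MvPolynomial (Fin 2) ℂ :=
    fun t => ∏ s ∈ T.erase t.1, lf s t.1 with hf
  have hfd : ∀ t, (f t).totalDegree ≤ n := by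
    intro t
    refine le_trans (totalDegree_finset_prod _ _) ?_
    have h1 : ∑ s ∈ T.erase t.1, (lf s t.1).totalDegree ≤ (T.erase t.1).card • 1 :=
      Finset.sum_le_card_nsmul _ _ 1 (fun s _ => lf_deg s t.1)
    simp only [smul_eq_mul, mul_one] at h1
    have h3 := Finset.card_erase_of_mem t.2
    omega
  have hft : ∀ t : {t // t ∈ T}, MvPolynomial.eval (φv t.1) (f t) ≠ 0 := by
    intro t
    rw [hf, map_prod, Finset.prod_ne_zero_iff]
    intro s hs
    exact lf_ne s t.1 (Finset.ne_of_mem_erase hs)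
  have hfs : ∀ t s : {t // t ∈ T}, s ≠ t → MvPolynomial.eval (φv s.1) (f t) = 0 := by
    intro t s hst
    rw [hf, map_prod]
    refine Finset.prod_eq_zero (i := s.1) ?_ (lf_vanish s.1 t.1)
    refine Finset.mem_erase.mpr ⟨?_, s.2⟩
    exact fun h => hst (Subtype.ext h)
  refine ⟨∑ t : {t // t ∈ T}, (w t / MvPolynomial.eval (φv t.1) (f t)) • f t, ?_, ?_⟩
  · refine le_trans (totalDegree_finset_sum _ _) ?_
    refine Finset.sup_le fun t _ => le_trans (totalDegree_smul_le _ _) (hfd t)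
  · intro t
    rw [map_sum]
    rw [Finset.sum_eq_single t]
    · rw [smul_eq_C_mul, map_mul, eval_C, div_mul_cancel₀ _ (hft t)]
    · intro s _ hst
      rw [smul_eq_C_mul, map_mul, hfs s t hst.symm]
      ring
    · intro h
      exact absurd (Finset.mem_univ t) h

/-- Existence of a nonzero low-degree polynomial vanishing on few points. -/
lemma exists_vanishing (T : Finset (ℂ × ℂ)) (n : ℕ) (h : T.card < Dd n) :
    ∃ p : MvPolynomial (Fin 2) ℂ, p ≠ 0 ∧ p.totalDegree ≤ n ∧
      ∀ t ∈ T, MvPolynomial.eval (φv t) p = 0 := by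
  classical
  set ev : Wd n →ₗ[ℂ] ({t // t ∈ T} → ℂ) := (evL T).comp (Wd n).subtype with hev
  by_contra hcon
  push_neg at hcon
  have hinj : Function.Injective ev := by
    rw [← LinearMap.ker_eq_bot, Submodule.eq_bot_iff]
    rintro ⟨p, hp⟩ hker
    rw [LinearMap.mem_ker] at hker
    have hz : ∀ t ∈ T, MvPolynomial.eval (φv t) p = 0 := by
      intro t ht
      have := congrFun hker ⟨t, ht⟩
      simpa [hev, evL_apply] using this
    rcases eq_or_ne p 0 with h0 | h0
    · exact Subtype.ext h0
    · obtain ⟨t, ht, hne⟩ := hcon p h0 (mem_Wd.mp hp)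
      exact absurd (hz t ht) hne
  have hle := LinearMap.finrank_le_finrank_of_injective hinj
  rw [finrank_W n, Module.finrank_pi, Fintype.card_coe] at hle
  omega

set_option synthInstance.maxHeartbeats 1000000 in
/-- Weak Bézout bound. -/
lemma bezout_count (g p : MvPolynomial (Fin 2) ℂ) (hg : Irreducible g) (hgp : ¬ g ∣ p)
    (hp : p ≠ 0) (T : Finset (ℂ × ℂ))
    (hT : ∀ t ∈ T, MvPolynomial.eval (φv t) g = 0 ∧ MvPolynomial.eval (φv t) p = 0) :
    T.card ≤ g.totalDegree * p.totalDegree := by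
  classical
  set m := g.totalDegree with hm
  set d := p.totalDegree with hd
  set k := T.card with hk
  set n := m + d + k with hn
  have hg0 : g ≠ 0 := hg.ne_zero
  have hmulg : Function.Injective (LinearMap.mulLeft ℂ g) := fun a b hab => by
    have h' : g * a = g * b := by simpa using hab
    exact mul_left_cancel₀ hg0 h'
  have hmulp : Function.Injective (LinearMap.mulLeft ℂ p) := fun a b hab => by
    have h' : p * a = p * b := by simpa using hab
    exact mul_left_cancel₀ hp h'
  set U1 := Submodule.map (LinearMap.mulLeft ℂ g) (Wd (d + k)) with hU1
  set U2 := Submodule.map (LinearMap.mulLeft ℂ p) (Wd (m + k)) with hU2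
  haveI : FiniteDimensional ℂ U1 :=
    Module.Finite.equiv (Submodule.equivMapOfInjective _ hmulg (Wd (d + k)))
  haveI : FiniteDimensional ℂ U2 :=
    Module.Finite.equiv (Submodule.equivMapOfInjective _ hmulp (Wd (m + k)))
  have hU1le : U1 ≤ Wd n := by
    intro x hx
    obtain ⟨a, ha, rfl⟩ := Submodule.mem_map.mp hx
    rw [LinearMap.mulLeft_apply]
    rw [mem_Wd] at ha ⊢
    have := totalDegree_mul g a
    omega
  have hU2le : U2 ≤ Wd n := by
    intro x hx
    obtain ⟨b, hb, rfl⟩ := Submodule.mem_map.mp hx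
    rw [LinearMap.mulLeft_apply]
    rw [mem_Wd] at hb ⊢
    have := totalDegree_mul p b
    omega
  have hUle : U1 ⊔ U2 ≤ Wd n := sup_le hU1le hU2le
  have hr1 : Module.finrank ℂ U1 = Dd (d + k) := by
    rw [← (Submodule.equivMapOfInjective _ hmulg (Wd (d + k))).finrank_eq, finrank_W]
  have hr2 : Module.finrank ℂ U2 = Dd (m + k) := by
    rw [← (Submodule.equivMapOfInjective _ hmulp (Wd (m + k))).finrank_eq, finrank_W]
  have hinfle : U1 ⊓ U2 ≤ Submodule.map (LinearMap.mulLeft ℂ (g * p)) (Wd k) := by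
    intro x hx
    obtain ⟨hx1, hx2⟩ := Submodule.mem_inf.mp hx
    obtain ⟨a, ha, hxa⟩ := Submodule.mem_map.mp hx1
    obtain ⟨b, hb, hxb⟩ := Submodule.mem_map.mp hx2
    rw [LinearMap.mulLeft_apply] at hxa hxb
    rcases eq_or_ne b 0 with rfl | hb0
    · refine Submodule.mem_map.mpr ⟨0, Submodule.zero_mem _, ?_⟩
      rw [LinearMap.mulLeft_apply, mul_zero, ← hxb, mul_zero]
    have hprime : Prime g := UniqueFactorizationMonoid.irreducible_iff_prime.mp hg
    have hdvd : g ∣ p * b := ⟨a, hxb.trans hxa.symm⟩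
    have hgb : g ∣ b := (hprime.dvd_or_dvd hdvd).resolve_left hgp
    obtain ⟨w, rfl⟩ := hgb
    have hw0 : w ≠ 0 := fun h => hb0 (by rw [h, mul_zero])
    have hwdeg : w.totalDegree ≤ k := by
      rw [mem_Wd, totalDegree_mul_eq hg0 hw0] at hb
      omega
    refine Submodule.mem_map.mpr ⟨w, mem_Wd.mpr hwdeg, ?_⟩
    rw [LinearMap.mulLeft_apply, ← hxb]
    ring
  have hrinf : Module.finrank ℂ (U1 ⊓ U2 : Submodule ℂ (MvPolynomial (Fin 2) ℂ)) ≤ Dd k := by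
    have hinjgp : Function.Injective (LinearMap.mulLeft ℂ (g * p)) := fun a b hab => by
      have h' := hab
      simp only [LinearMap.mulLeft_apply] at h'
      exact mul_left_cancel₀ (mul_ne_zero hg0 hp) h'
    haveI : FiniteDimensional ℂ (Submodule.map (LinearMap.mulLeft ℂ (g * p)) (Wd k)) :=
      Module.Finite.equiv (Submodule.equivMapOfInjective _ hinjgp (Wd k))
    have h1 : Module.finrank ℂ (Submodule.map (LinearMap.mulLeft ℂ (g * p)) (Wd k)) ≤ Dd k := by
      rw [← (Submodule.equivMapOfInjective _ hinjgp (Wd k)).finrank_eq, finrank_W]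
    exact le_trans (Submodule.finrank_mono hinfle) h1
  have hrsup : Dd (d + k) + Dd (m + k) ≤
      Module.finrank ℂ (U1 ⊔ U2 : Submodule ℂ (MvPolynomial (Fin 2) ℂ)) + Dd k := by
    have := Submodule.finrank_sup_add_finrank_inf_eq U1 U2
    omega
  set ev : Wd n →ₗ[ℂ] ({t // t ∈ T} → ℂ) := (evL T).comp (Wd n).subtype with hev
  have hsurj : Function.Surjective ev := by
    intro w
    obtain ⟨P, hPdeg, hPval⟩ := surj_ev T n (by omega) w
    exact ⟨⟨P, mem_Wd.mpr hPdeg⟩, funext fun t => by simpa [hev, evL_apply] using hPval t⟩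
  have hker : ∀ (x : MvPolynomial (Fin 2) ℂ) (hx : x ∈ Wd n), x ∈ U1 ⊔ U2 →
      (⟨x, hx⟩ : Wd n) ∈ LinearMap.ker ev := by
    intro x hx hmem
    obtain ⟨y, hy, z, hz, hyz⟩ := Submodule.mem_sup.mp hmem
    obtain ⟨a, _, rfl⟩ := Submodule.mem_map.mp hy
    obtain ⟨b, _, rfl⟩ := Submodule.mem_map.mp hz
    have hyz' : g * a + p * b = x := by simpa using hyz
    rw [LinearMap.mem_ker]
    funext t
    have h1 := (hT t.1 t.2).1
    have h2 := (hT t.1 t.2).2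
    show MvPolynomial.eval (φv t.1) x = 0
    rw [← hyz']
    simp [h1, h2]
  have hkerrank : Module.finrank ℂ (U1 ⊔ U2 : Submodule ℂ (MvPolynomial (Fin 2) ℂ)) ≤
      Module.finrank ℂ (LinearMap.ker ev) := by
    set K := Submodule.map (Wd n).subtype (LinearMap.ker ev) with hK
    haveI : FiniteDimensional ℂ K :=
      Module.Finite.equiv (Submodule.equivMapOfInjective _ (Submodule.injective_subtype _) _)
    have h1 : Module.finrank ℂ K = Module.finrank ℂ (LinearMap.ker ev) :=
      ((Submodule.equivMapOfInjective _ (Submodule.injective_subtype _)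
        (LinearMap.ker ev)).finrank_eq).symm
    rw [← h1]
    refine Submodule.finrank_mono ?_
    intro x hx
    exact Submodule.mem_map.mpr ⟨⟨x, hUle hx⟩, hker x (hUle hx) hx, rfl⟩
  have hrn := LinearMap.finrank_range_add_finrank_ker ev
  rw [LinearMap.range_eq_top.mpr hsurj, finrank_W n] at hrn
  have hrtop : Module.finrank ℂ (⊤ : Submodule ℂ ({t // t ∈ T} → ℂ)) = k := by
    rw [finrank_top, Module.finrank_pi, Fintype.card_coe]
  rw [hrtop] at hrn
  have hD : Dd n + Dd k = Dd (d + k) + Dd (m + k) + m * d := by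
    have e1 := two_Dd n
    have e2 := two_Dd k
    have e3 := two_Dd (d + k)
    have e4 := two_Dd (m + k)
    have e5 : (n + 1) * (n + 2) + (k + 1) * (k + 2)
        = (d + k + 1) * (d + k + 2) + (m + k + 1) * (m + k + 2) + 2 * (m * d) := by
      rw [hn]; ring
    omega
  omega

lemma eq_C_of_deg_zero {q : MvPolynomial (Fin 2) ℂ} (h : q.totalDegree = 0) :
    q = C (coeff 0 q) := by
  ext m
  rcases eq_or_ne m 0 with rfl | hm
  · simp
  · rw [coeff_C, if_neg (fun h' => hm h'.symm)]
    by_contra h0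
    have hmem : m ∈ q.support := mem_support_iff.mpr h0
    have hz := (totalDegree_eq_zero_iff (Fin 2) q).mp h m hmem
    exact h0 (by simpa using absurd (Finsupp.ext fun i => hz i) hm)

lemma irred_deg_pos {q : MvPolynomial (Fin 2) ℂ} (hq : Irreducible q) :
    0 < q.totalDegree := by
  by_contra h
  push_neg at h
  have h0 : q.totalDegree = 0 := Nat.le_zero.mp h
  have hC := eq_C_of_deg_zero h0
  refine hq.not_isUnit ?_
  rw [hC]
  refine IsUnit.map (C : ℂ →+* MvPolynomial (Fin 2) ℂ) ?_
  refine isUnit_iff_ne_zero.mpr (fun hc => hq.ne_zero ?_)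
  rw [hC, hc, map_zero]

lemma deg_pos_of_vanish {p : MvPolynomial (Fin 2) ℂ} (hp0 : p ≠ 0) {x : ℂ × ℂ}
    (hx : MvPolynomial.eval (φv x) p = 0) : 0 < p.totalDegree := by
  by_contra h
  push_neg at h
  have h0 : p.totalDegree = 0 := Nat.le_zero.mp h
  have hC := eq_C_of_deg_zero h0
  rw [hC] at hx
  rw [eval_C] at hx
  exact hp0 (by rw [hC, hx, map_zero])

lemma exists_irred_factor {S : Set (ℂ × ℂ)} (hS : S.Infinite)
    (hfin : ∀ q : MvPolynomial (Fin 2) ℂ, Irreducible q → ¬ S ⊆ Zs q → (S ∩ Zs q).Finite)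
    {p : MvPolynomial (Fin 2) ℂ} (hp0 : p ≠ 0) (hSp : S ⊆ Zs p) :
    ∃ q : MvPolynomial (Fin 2) ℂ, Irreducible q ∧ q.totalDegree ≤ p.totalDegree ∧ S ⊆ Zs q := by
  classical
  obtain ⟨f, hfprime, hfassoc⟩ := UniqueFactorizationMonoid.exists_prime_factors p hp0
  have hx : ∀ x ∈ S, ∃ q ∈ f, MvPolynomial.eval (φv x) q = 0 := by
    intro x hxS
    have hpx : MvPolynomial.eval (φv x) p = 0 := hSp hxS
    obtain ⟨u, hup⟩ := hfassoc
    have hmul : MvPolynomial.eval (φv x) f.prod * MvPolynomial.eval (φv x) u.1 = 0 := by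
      rw [← map_mul, hup, hpx]
    have hu0 : MvPolynomial.eval (φv x) u.1 ≠ 0 :=
      (u.isUnit.map (MvPolynomial.eval (φv x))).ne_zero
    have hprod : MvPolynomial.eval (φv x) f.prod = 0 :=
      (mul_eq_zero.mp hmul).resolve_right hu0
    rw [map_multiset_prod, Multiset.prod_eq_zero_iff] at hprod
    obtain ⟨q, hqf, hq0⟩ := Multiset.mem_map.mp hprod
    exact ⟨q, hqf, hq0⟩
  by_contra hcon
  push_neg at hcon
  have hcover : S ⊆ ⋃ q ∈ f.toFinset, (S ∩ Zs q) := by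
    intro x hxS
    obtain ⟨q, hqf, hq0⟩ := hx x hxS
    exact Set.mem_biUnion (Multiset.mem_toFinset.mpr hqf) ⟨hxS, hq0⟩
  have hfinU : (⋃ q ∈ f.toFinset, (S ∩ Zs q)).Finite := by
    refine Set.Finite.biUnion (f.toFinset.finite_toSet) ?_
    intro q hq
    have hqf := Multiset.mem_toFinset.mp hq
    have hirr : Irreducible q := (hfprime q hqf).irreducible
    have hdvd : q ∣ p := dvd_trans (Multiset.dvd_prod hqf) ((hfassoc).dvd)
    have hdeg : q.totalDegree ≤ p.totalDegree := totalDegree_dvd_le hdvd hp0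
    exact hfin q hirr (hcon q hirr hdeg)
  exact hS (hfinU.subset hcover)

end stmt5aux

open MvPolynomial

/-- If `S ⊆ ℂ²` is infinite and there are constants `A ≥ 1`, `1 ≤ α < 2` with
`|S ∩ X| ≤ A (deg X)^α` for every algebraic curve `X` not containing `S`, then `S` is
contained in an irreducible algebraic curve `Γ` of degree at most `(2A)^{1/(2-α)}`, and
`|S ∩ X| ≤ (2A)^{1/(2-α)} · deg X` for every algebraic curve `X` not containing `S`. -/
theorem stmt_5 (S : Set (ℂ × ℂ)) (hS : S.Infinite) (A α : ℝ) (hA : 1 ≤ A)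
    (hα1 : 1 ≤ α) (hα2 : α < 2)
    (hbound : ∀ p : MvPolynomial (Fin 2) ℂ, 0 < p.totalDegree →
      ¬ S ⊆ {x : ℂ × ℂ | MvPolynomial.eval (fun i : Fin 2 => if i = 0 then x.1 else x.2) p = 0} →
      (S ∩ {x : ℂ × ℂ | MvPolynomial.eval (fun i : Fin 2 => if i = 0 then x.1 else x.2) p = 0}).Finite ∧
      ((S ∩ {x : ℂ × ℂ | MvPolynomial.eval (fun i : Fin 2 => if i = 0 then x.1 else x.2) p = 0}).ncard : ℝ) ≤
        A * (p.totalDegree : ℝ) ^ α) :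
    (∃ g : MvPolynomial (Fin 2) ℂ, Irreducible g ∧
      (g.totalDegree : ℝ) ≤ (2 * A) ^ (1 / (2 - α)) ∧
      S ⊆ {x : ℂ × ℂ | MvPolynomial.eval (fun i : Fin 2 => if i = 0 then x.1 else x.2) g = 0}) ∧
    ∀ p : MvPolynomial (Fin 2) ℂ, 0 < p.totalDegree →
      ¬ S ⊆ {x : ℂ × ℂ | MvPolynomial.eval (fun i : Fin 2 => if i = 0 then x.1 else x.2) p = 0} →
      (S ∩ {x : ℂ × ℂ | MvPolynomial.eval (fun i : Fin 2 => if i = 0 then x.1 else x.2) p = 0}).Finite ∧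
      ((S ∩ {x : ℂ × ℂ | MvPolynomial.eval (fun i : Fin 2 => if i = 0 then x.1 else x.2) p = 0}).ncard : ℝ) ≤
        (2 * A) ^ (1 / (2 - α)) * (p.totalDegree : ℝ) := by
  classical
  have hZ : ∀ p : MvPolynomial (Fin 2) ℂ,
      {x : ℂ × ℂ | MvPolynomial.eval (fun i : Fin 2 => if i = 0 then x.1 else x.2) p = 0}
        = Zs p := fun p => rfl
  simp only [hZ] at hbound ⊢
  have hαpos : (0:ℝ) < 2 - α := by linarith
  have h2A : (1:ℝ) ≤ 2 * A := by linarith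
  set B := (2 * A) ^ (1 / (2 - α)) with hBdef
  have hB1 : (1:ℝ) ≤ B := Real.one_le_rpow h2A (by positivity)
  have hfin : ∀ q : MvPolynomial (Fin 2) ℂ, Irreducible q → ¬ S ⊆ Zs q → (S ∩ Zs q).Finite :=
    fun q hq hns => (hbound q (irred_deg_pos hq) hns).1
  -- main dichotomy for a given degree n
  have key : ∀ n : ℕ, 1 ≤ n →
      (∃ p : MvPolynomial (Fin 2) ℂ, p ≠ 0 ∧ p.totalDegree ≤ n ∧ S ⊆ Zs p) ∨
      (((Dd n - 1 : ℕ) : ℝ) ≤ A * (n:ℝ) ^ α) := by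
    intro n hn
    have hDd3 : 3 ≤ Dd n := by
      have h2 := two_Dd n
      have h6 : 6 ≤ (n+1)*(n+2) := Nat.mul_le_mul (show 2 ≤ n+1 by omega) (show 3 ≤ n+2 by omega)
      omega
    obtain ⟨T, hTS, hTcard⟩ := hS.exists_subset_card_eq (Dd n - 1)
    obtain ⟨p₀, hp₀0, hp₀deg, hp₀van⟩ := exists_vanishing T n (by omega)
    by_cases hsub : S ⊆ Zs p₀
    · exact Or.inl ⟨p₀, hp₀0, hp₀deg, hsub⟩
    · right
      obtain ⟨t0, ht0⟩ := Finset.card_pos.mp (show 0 < T.card by omega)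
      have hdpos : 0 < p₀.totalDegree := deg_pos_of_vanish hp₀0 (hp₀van t0 ht0)
      obtain ⟨hfin0, hbd⟩ := hbound p₀ hdpos hsub
      have hsubT : (T : Set (ℂ × ℂ)) ⊆ S ∩ Zs p₀ := fun x hx => ⟨hTS hx, hp₀van x hx⟩
      have hcard : (Dd n - 1 : ℕ) ≤ (S ∩ Zs p₀).ncard := by
        rw [← hTcard, ← Set.ncard_coe_finset]
        exact Set.ncard_le_ncard hsubT hfin0
      have hmono : ((p₀.totalDegree : ℝ)) ^ α ≤ (n:ℝ) ^ α :=
        Real.rpow_le_rpow (by positivity) (by exact_mod_cast hp₀deg) (by linarith)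
      calc ((Dd n - 1 : ℕ) : ℝ) ≤ ((S ∩ Zs p₀).ncard : ℝ) := by exact_mod_cast hcard
        _ ≤ A * (p₀.totalDegree:ℝ) ^ α := hbd
        _ ≤ A * (n:ℝ) ^ α := mul_le_mul_of_nonneg_left hmono (by linarith)
  -- cast helper
  have hcastD : ∀ n : ℕ, 1 ≤ n → ((Dd n - 1 : ℕ) : ℝ) * 2 = (n:ℝ)^2 + 3*(n:ℝ) := by
    intro n hn
    have h2 := two_Dd n
    have hDd3 : 3 ≤ Dd n := by
      have h6 : 6 ≤ (n+1)*(n+2) := Nat.mul_le_mul (show 2 ≤ n+1 by omega) (show 3 ≤ n+2 by omega)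
      omega
    have hnat : (Dd n - 1) * 2 = n^2 + 3*n := by
      have : (n+1)*(n+2) = n^2+3*n+2 := by ring
      omega
    exact_mod_cast congrArg (Nat.cast : ℕ → ℝ) hnat
  -- step A : find an irreducible curve containing S
  have hstepA : ∃ q : MvPolynomial (Fin 2) ℂ, Irreducible q ∧ S ⊆ Zs q := by
    set n₁ : ℕ := max 1 ⌈(2*A) ^ (1 / (2 - α))⌉₊ with hn₁def
    have hn₁1 : 1 ≤ n₁ := le_max_left _ _
    have hn₁B : B ≤ (n₁ : ℝ) := by
      refine le_trans (Nat.le_ceil _) ?_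
      exact_mod_cast Nat.cast_le.mpr (le_max_right 1 ⌈(2*A) ^ (1 / (2 - α))⌉₊)
    have hn₁pow : 2 * A ≤ (n₁:ℝ) ^ (2 - α) := by
      have h1 : ((2*A) ^ (1/(2-α))) ^ (2-α) ≤ (n₁:ℝ) ^ (2-α) :=
        Real.rpow_le_rpow (by positivity) hn₁B (by linarith)
      rwa [← Real.rpow_mul (by linarith : (0:ℝ) ≤ 2*A),
        one_div_mul_cancel (by linarith : (2:ℝ) - α ≠ 0), Real.rpow_one] at h1
    rcases key n₁ hn₁1 with ⟨p₀, hp0, hpdeg, hpsub⟩ | hnum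
    · obtain ⟨q, hq1, _, hq3⟩ := exists_irred_factor hS hfin hp0 hpsub
      exact ⟨q, hq1, hq3⟩
    · exfalso
      have hn₁R : (1:ℝ) ≤ (n₁:ℝ) := by exact_mod_cast hn₁1
      have hxα : (0:ℝ) < (n₁:ℝ)^α := Real.rpow_pos_of_pos (by linarith) α
      have hprod : (n₁:ℝ)^(2-α) * (n₁:ℝ)^α = (n₁:ℝ)^2 := by
        rw [← Real.rpow_add (by linarith : (0:ℝ) < (n₁:ℝ))]
        rw [show (2 - α + α : ℝ) = ((2:ℕ):ℝ) by push_cast; ring, Real.rpow_natCast]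
      have hD2 := hcastD n₁ hn₁1
      nlinarith [hnum, hn₁pow, hxα, hprod, hD2, hn₁R]
  -- step B : minimal degree irreducible curve containing S
  have hSetne : {k : ℕ | ∃ q : MvPolynomial (Fin 2) ℂ,
      Irreducible q ∧ S ⊆ Zs q ∧ q.totalDegree = k}.Nonempty := by
    obtain ⟨q₁, hq₁irr, hq₁sub⟩ := hstepA
    exact ⟨q₁.totalDegree, q₁, hq₁irr, hq₁sub, rfl⟩
  set m := sInf {k : ℕ | ∃ q : MvPolynomial (Fin 2) ℂ,
      Irreducible q ∧ S ⊆ Zs q ∧ q.totalDegree = k} with hmdef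
  obtain ⟨g, hgirr, hgsub, hgdeg⟩ := Nat.sInf_mem hSetne
  have hmmin : ∀ q : MvPolynomial (Fin 2) ℂ, Irreducible q → S ⊆ Zs q → m ≤ q.totalDegree :=
    fun q h1 h2 => Nat.sInf_le ⟨q, h1, h2, rfl⟩
  have hm1 : 1 ≤ m := by
    rw [hmdef, ← hgdeg]
    exact irred_deg_pos hgirr

  -- step C : the degree bound m ≤ B
  have hmB : (m:ℝ) ≤ B := by
    rcases Nat.lt_or_ge m 2 with hm2 | hm2
    · have h1 : (m:ℝ) ≤ 1 := by exact_mod_cast (show m ≤ 1 by omega)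
      linarith
    · have hnn1 : 1 ≤ m - 1 := by omega
      rcases key (m-1) hnn1 with ⟨r, hr0, hrdeg, hrsub⟩ | hnum
      · exfalso
        obtain ⟨q₂, hq₂irr, hq₂deg, hq₂sub⟩ := exists_irred_factor hS hfin hr0 hrsub
        have := hmmin q₂ hq₂irr hq₂sub
        omega
      · set x : ℝ := ((m - 1 : ℕ) : ℝ) with hxdef
        have hx1 : (1:ℝ) ≤ x := by rw [hxdef]; exact_mod_cast hnn1
        have hx0 : (0:ℝ) < x := by linarith
        have hmx : (m:ℝ) = x + 1 := by
          rw [hxdef]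
          push_cast [Nat.cast_sub (by omega : 1 ≤ m)]
          ring
        have hD2 := hcastD (m-1) hnn1
        have h1 : x^2 + 3*x ≤ 2*A*x^α := by nlinarith [hnum]
        have hxα : (0:ℝ) < x^α := Real.rpow_pos_of_pos hx0 α
        have hbern : (1 + 1/x)^(2-α) ≤ 1 + (2-α)*(1/x) := by
          refine rpow_one_add_le_one_add_mul_self ?_ (by linarith) (by linarith)
          have : (0:ℝ) ≤ 1/x := by positivity
          linarith
        have hx2a : (0:ℝ) ≤ x^(2-α) := (Real.rpow_pos_of_pos hx0 _).le
        have hmulr : (m:ℝ)^(2-α) = x^(2-α) * (1+1/x)^(2-α) := by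
          rw [← Real.mul_rpow hx0.le (by positivity)]
          congr 1
          field_simp
          linarith [hmx]
        have hstep : (m:ℝ)^(2-α) ≤ x^(2-α) * (1 + (2-α)*(1/x)) := by
          rw [hmulr]
          exact mul_le_mul_of_nonneg_left hbern hx2a
        have hxx : x^(2-α) * x^α = x^2 := by
          rw [← Real.rpow_add hx0]
          rw [show (2 - α + α : ℝ) = ((2:ℕ):ℝ) by push_cast; ring, Real.rpow_natCast]
        have hfinal : (m:ℝ)^(2-α) * x^α ≤ 2*A*x^α := by
          have h3 : (m:ℝ)^(2-α) * x^α ≤ (x^(2-α) * (1 + (2-α)*(1/x))) * x^α :=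
            mul_le_mul_of_nonneg_right hstep hxα.le
          have h4 : (x^(2-α) * (1 + (2-α)*(1/x))) * x^α = x^2 + (2-α)*x := by
            rw [show (x^(2-α) * (1 + (2-α)*(1/x))) * x^α
                = (x^(2-α) * x^α) * (1 + (2-α)*(1/x)) by ring, hxx]
            field_simp
          rw [h4] at h3
          have h5 : x^2 + (2-α)*x ≤ x^2 + 3*x := by nlinarith
          linarith
        have hle : (m:ℝ)^(2-α) ≤ 2*A := (mul_le_mul_iff_left₀ hxα).mp hfinal
        have hm0 : (0:ℝ) ≤ (m:ℝ) := by positivity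
        have hid : ((m:ℝ)^(2-α))^(1/(2-α)) = (m:ℝ) := by
          rw [← Real.rpow_mul hm0, mul_one_div_cancel (by linarith : (2:ℝ) - α ≠ 0),
            Real.rpow_one]
        calc (m:ℝ) = ((m:ℝ)^(2-α))^(1/(2-α)) := hid.symm
          _ ≤ (2*A)^(1/(2-α)) :=
            Real.rpow_le_rpow (Real.rpow_nonneg hm0 _) hle (by positivity)
  -- conclusion
  have hgm : g.totalDegree = m := hgdeg
  rw [← hgm] at hmB
  refine ⟨⟨g, hgirr, hmB, hgsub⟩, ?_⟩
  intro p hdp hnsub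
  obtain ⟨hfinp, _⟩ := hbound p hdp hnsub
  refine ⟨hfinp, ?_⟩
  have hp0 : p ≠ 0 := by
    intro h0
    refine hnsub ?_
    intro x _
    show MvPolynomial.eval (φv x) p = 0
    rw [h0, map_zero]
  have hgdvd : ¬ g ∣ p := by
    rintro ⟨t, rfl⟩
    refine hnsub ?_
    intro x hx
    show MvPolynomial.eval (φv x) (g * t) = 0
    rw [map_mul, hgsub hx, zero_mul]
  set F := hfinp.toFinset with hF
  have hFprop : ∀ t ∈ F, MvPolynomial.eval (φv t) g = 0 ∧ MvPolynomial.eval (φv t) p = 0 := by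
    intro t ht
    rw [hF, Set.Finite.mem_toFinset] at ht
    exact ⟨hgsub ht.1, ht.2⟩
  have hbez := bezout_count g p hgirr hgdvd hp0 F hFprop
  have hncard : (S ∩ Zs p).ncard = F.card := Set.ncard_eq_toFinset_card _ hfinp
  have hcount : ((S ∩ Zs p).ncard : ℝ) ≤ (g.totalDegree : ℝ) * (p.totalDegree : ℝ) := by
    rw [hncard]
    exact_mod_cast hbez
  refine le_trans hcount ?_
  have hd1 : (0:ℝ) ≤ (p.totalDegree : ℝ) := by positivity
  exact mul_le_mul_of_nonneg_right hmB hd1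
end

section
/- Let g be holomorphic on a neighborhood of the closed disk of radius s, and suppose g has at least N zeros (counted with multiplicity) in the closed disk of radius r, where 0 < r < s. Then max_{|z|=r}|g(z)| ≤ max_{|z|=s}|g(z)| · (2rs/(r²+s²))^N. -/
open Metric

lemma real_key (r s p q x y : ℝ) (hr : 0 < r) (hrs : r < s)
    (ha2 : p ^ 2 + q ^ 2 ≤ r ^ 2) (hw2 : x ^ 2 + y ^ 2 = r ^ 2) :
    ((x - p) ^ 2 + (y - q) ^ 2) * (r ^ 2 + s ^ 2) ^ 2
      ≤ (2 * r) ^ 2 * ((s ^ 2 - (p * x + q * y)) ^ 2 + (p * y - q * x) ^ 2) := by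
  have hbt : (p ^ 2 + q ^ 2) * r ^ 2 = (p * x + q * y) ^ 2 + (p * y - q * x) ^ 2 := by
    rw [← hw2]; ring
  have he : (0:ℝ) < s ^ 2 - r ^ 2 := by nlinarith
  have hA : (x - p) ^ 2 + (y - q) ^ 2
      = r ^ 2 + (p ^ 2 + q ^ 2) - 2 * (p * x + q * y) := by linear_combination hw2
  have hB : (s ^ 2 - (p * x + q * y)) ^ 2 + (p * y - q * x) ^ 2
      = s ^ 4 - 2 * s ^ 2 * (p * x + q * y) + (p ^ 2 + q ^ 2) * r ^ 2 := by
    linear_combination -hbt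
  rw [hA, hB]
  obtain ⟨b, hbdef⟩ : ∃ b, b = p ^ 2 + q ^ 2 := ⟨_, rfl⟩
  obtain ⟨t, htdef⟩ : ∃ t, t = p * x + q * y := ⟨_, rfl⟩
  rw [← hbdef, ← htdef]
  have ht2 : (0:ℝ) ≤ b * r ^ 2 - t ^ 2 := by
    rw [hbdef, htdef, hbt]; nlinarith [sq_nonneg (p * y - q * x)]
  have hb' : (0:ℝ) ≤ r ^ 2 - b := by rw [hbdef]; linarith
  have hrr : (0:ℝ) < r ^ 2 := by positivity
  have hscaled : (r ^ 2 + b - 2 * t) * (r ^ 2 + s ^ 2) ^ 2 * r ^ 2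
      ≤ (2 * r) ^ 2 * (s ^ 4 - 2 * s ^ 2 * t + b * r ^ 2) * r ^ 2 := by
    nlinarith [sq_nonneg ((s ^ 2 - r ^ 2) * (t + r ^ 2)),
      mul_nonneg (sq_nonneg (s ^ 2 - r ^ 2)) ht2,
      mul_nonneg (mul_nonneg (mul_nonneg hrr.le (by positivity : (0:ℝ) ≤ r ^ 2 + s ^ 2)) hb') he.le]
  exact le_of_mul_le_mul_right (by linarith [hscaled]) hrr

lemma key_ineq (r s : ℝ) (hr : 0 < r) (hrs : r < s) (a w : ℂ) (ha : ‖a‖ ≤ r)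
    (hw : ‖w‖ = r) :
    ‖w - a‖ ≤ 2 * r / (r ^ 2 + s ^ 2) * ‖(s : ℂ) ^ 2 - (starRingEnd ℂ a) * w‖ := by
  have hc : (0:ℝ) < 2 * r / (r ^ 2 + s ^ 2) := by positivity
  have hsq : ‖w - a‖ ^ 2 ≤ (2 * r / (r ^ 2 + s ^ 2) * ‖(s : ℂ) ^ 2 - (starRingEnd ℂ a) * w‖) ^ 2 := by
    have ha2 : a.re ^ 2 + a.im ^ 2 ≤ r ^ 2 := by
      have h1 : ‖a‖ ^ 2 ≤ r ^ 2 := by nlinarith [norm_nonneg a]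
      rw [Complex.sq_norm, Complex.normSq_apply] at h1
      nlinarith [h1]
    have hw2 : w.re ^ 2 + w.im ^ 2 = r ^ 2 := by
      have h1 : ‖w‖ ^ 2 = r ^ 2 := by rw [hw]
      rw [Complex.sq_norm, Complex.normSq_apply] at h1
      nlinarith [h1]
    have e1 : ‖w - a‖ ^ 2 = (w.re - a.re) ^ 2 + (w.im - a.im) ^ 2 := by
      rw [Complex.sq_norm, Complex.normSq_apply]
      simp [Complex.sub_re, Complex.sub_im]; ring
    have e2 : ‖(s : ℂ) ^ 2 - (starRingEnd ℂ a) * w‖ ^ 2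
        = (s ^ 2 - (a.re * w.re + a.im * w.im)) ^ 2 + (a.re * w.im - a.im * w.re) ^ 2 := by
      rw [Complex.sq_norm, Complex.normSq_apply]
      simp [Complex.mul_re, Complex.mul_im, Complex.conj_re, Complex.conj_im,
        Complex.sub_re, Complex.sub_im, ← Complex.ofReal_pow, Complex.ofReal_re,
        Complex.ofReal_im]
      ring
    rw [e1, mul_pow, e2, div_pow, div_mul_eq_mul_div, le_div_iff₀ (by positivity)]
    exact real_key r s a.re a.im w.re w.im hr hrs ha2 hw2
  nlinarith [norm_nonneg (w - a),
    mul_nonneg hc.le (norm_nonneg ((s : ℂ) ^ 2 - (starRingEnd ℂ a) * w)), hsq]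

/-- If `g` is holomorphic on a neighborhood `U` of the closed disk of radius `s` and has
at least `N` zeros, counted with multiplicity, in the closed disk of radius `r < s`
(encoded: `g(w) = ∏ᵢ (w - zᵢ) · h(w)` with `h` holomorphic on `U` and `|zᵢ| ≤ r`), then
`max_{|z|=r} |g z| ≤ max_{|z|=s} |g z| · (2rs/(r²+s²))^N`. -/
theorem stmt_9 (g : ℂ → ℂ) (r s : ℝ) (N : ℕ) (hr0 : 0 < r) (hrs : r < s)
    (U : Set ℂ) (hU : IsOpen U) (hUs : closedBall (0 : ℂ) s ⊆ U)
    (hg : DifferentiableOn ℂ g U)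
    (z : Fin N → ℂ) (hz : ∀ i, z i ∈ closedBall (0 : ℂ) r)
    (h : ℂ → ℂ) (hh : DifferentiableOn ℂ h U)
    (hfact : ∀ w ∈ U, g w = (∏ i, (w - z i)) * h w) :
    ∀ w ∈ sphere (0 : ℂ) r,
      ‖g w‖ ≤ sSup ((fun ζ => ‖g ζ‖) '' sphere (0 : ℂ) s) *
        (2 * r * s / (r ^ 2 + s ^ 2)) ^ N := by
  intro w hwr
  have hs0 : 0 < s := hr0.trans hrs
  have hwn : ‖w‖ = r := by simpa using hwr
  set M : ℝ := sSup ((fun ζ => ‖g ζ‖) '' sphere (0 : ℂ) s) with hM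
  have hsubU : sphere (0 : ℂ) s ⊆ U := fun x hx => hUs (sphere_subset_closedBall hx)
  have hbdd : BddAbove ((fun ζ => ‖g ζ‖) '' sphere (0 : ℂ) s) :=
    ((isCompact_sphere (0:ℂ) s).image_of_continuousOn
      ((hg.continuousOn.mono hsubU).norm)).bddAbove
  have hne : (sphere (0 : ℂ) s).Nonempty := NormedSpace.sphere_nonempty.2 hs0.le
  have hMle : ∀ ζ ∈ sphere (0 : ℂ) s, ‖g ζ‖ ≤ M := fun ζ hζ =>
    le_csSup hbdd ⟨ζ, hζ, rfl⟩
  have hM0 : 0 ≤ M := (norm_nonneg _).trans (hMle _ hne.choose_spec)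
  set G : ℂ → ℂ := fun x => h x * ∏ i, ((s : ℂ) ^ 2 - (starRingEnd ℂ (z i)) * x) with hG
  have hGd : DifferentiableOn ℂ G U := by
    apply hh.mul
    apply DifferentiableOn.fun_finsetProd
    intro i _
    exact (differentiableOn_const _).sub ((differentiableOn_const _).mul differentiableOn_id)
  -- bound G on sphere s
  have hGsphere : ∀ ζ ∈ sphere (0 : ℂ) s, ‖G ζ‖ ≤ s ^ N * M := by
    intro ζ hζ
    have hζn : ‖ζ‖ = s := by simpa using hζ
    have hfac : ∀ i, ‖(s : ℂ) ^ 2 - (starRingEnd ℂ (z i)) * ζ‖ = s * ‖ζ - z i‖ := by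
      intro i
      have hc : (s : ℂ) ^ 2 = ζ * (starRingEnd ℂ ζ) := by
        rw [Complex.mul_conj]
        norm_cast
        rw [← Complex.sq_norm, hζn]
      have he : (s : ℂ) ^ 2 - (starRingEnd ℂ (z i)) * ζ = ζ * (starRingEnd ℂ (ζ - z i)) := by
        rw [hc, map_sub]; ring
      rw [he, norm_mul, RCLike.norm_conj, hζn]
    have : ‖G ζ‖ = s ^ N * ‖g ζ‖ := by
      rw [hG]
      simp only
      rw [norm_mul, norm_prod]
      have : ∏ i, ‖(s : ℂ) ^ 2 - (starRingEnd ℂ (z i)) * ζ‖ = s ^ N * ∏ i, ‖ζ - z i‖ := by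
        rw [Finset.prod_congr rfl fun i _ => hfac i, Finset.prod_mul_distrib]
        simp
      rw [this, hfact ζ (hsubU hζ), norm_mul, norm_prod]
      ring
    rw [this]
    exact mul_le_mul_of_nonneg_left (hMle ζ hζ) (by positivity)
  -- maximum principle on ball 0 s
  have hGw : ‖G w‖ ≤ s ^ N * M := by
    have hcl : closure (ball (0:ℂ) s) = closedBall 0 s := closure_ball 0 hs0.ne'
    have hdc : DiffContOnCl ℂ G (ball (0:ℂ) s) :=
      ⟨hGd.mono (fun x hx => hUs (ball_subset_closedBall hx)),
       by rw [hcl]; exact (hGd.continuousOn).mono hUs⟩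
    have hfr : ∀ ζ ∈ frontier (ball (0:ℂ) s), ‖G ζ‖ ≤ s ^ N * M := by
      rw [frontier_ball 0 hs0.ne']
      exact hGsphere
    have hwcl : w ∈ closure (ball (0:ℂ) s) := by
      rw [hcl]
      exact closedBall_subset_closedBall hrs.le (sphere_subset_closedBall hwr)
    exact Complex.norm_le_of_forall_mem_frontier_norm_le isBounded_ball hdc hfr hwcl
  -- now the identity on sphere r
  have hwU : w ∈ U := hUs (closedBall_subset_closedBall hrs.le (sphere_subset_closedBall hwr))
  have hDpos : ∀ i, (0:ℝ) < ‖(s : ℂ) ^ 2 - (starRingEnd ℂ (z i)) * w‖ := by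
    intro i
    have hzi : ‖z i‖ ≤ r := by simpa using hz i
    have h1 : ‖(starRingEnd ℂ (z i)) * w‖ ≤ r * r := by
      rw [norm_mul, RCLike.norm_conj, hwn]
      exact mul_le_mul_of_nonneg_right hzi hr0.le
    have h2 : ‖(s:ℂ)^2‖ = s^2 := by
      rw [norm_pow, Complex.norm_real, Real.norm_of_nonneg hs0.le]
    calc (0:ℝ) < s^2 - r*r := by nlinarith
    _ ≤ ‖(s:ℂ)^2‖ - ‖(starRingEnd ℂ (z i)) * w‖ := by rw [h2]; linarith
    _ ≤ ‖(s : ℂ) ^ 2 - (starRingEnd ℂ (z i)) * w‖ := norm_sub_norm_le _ _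
  set D : ℝ := ∏ i, ‖(s : ℂ) ^ 2 - (starRingEnd ℂ (z i)) * w‖ with hD
  have hDpos' : 0 < D := Finset.prod_pos fun i _ => hDpos i
  -- ‖g w‖ * D = ‖G w‖ * ∏ ‖w - z i‖
  have hid : ‖g w‖ * D = ‖G w‖ * ∏ i, ‖w - z i‖ := by
    rw [hfact w hwU, hG]
    simp only [norm_mul, norm_prod]
    ring
  -- ∏ ‖w - z i‖ ≤ (2r/(r²+s²))^N * D
  have hprod : ∏ i, ‖w - z i‖ ≤ (2 * r / (r ^ 2 + s ^ 2)) ^ N * D := by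
    calc ∏ i, ‖w - z i‖
        ≤ ∏ i, (2 * r / (r ^ 2 + s ^ 2) * ‖(s : ℂ) ^ 2 - (starRingEnd ℂ (z i)) * w‖) := by
          apply Finset.prod_le_prod (fun i _ => norm_nonneg _)
          intro i _
          exact key_ineq r s hr0 hrs (z i) w (by simpa using hz i) hwn
      _ = (2 * r / (r ^ 2 + s ^ 2)) ^ N * D := by
          rw [Finset.prod_mul_distrib, hD]
          simp [div_pow]
  -- combine
  have hfinal : ‖g w‖ * D ≤ (s ^ N * M) * ((2 * r / (r ^ 2 + s ^ 2)) ^ N * D) := by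
    calc ‖g w‖ * D = ‖G w‖ * ∏ i, ‖w - z i‖ := hid
      _ ≤ (s ^ N * M) * ((2 * r / (r ^ 2 + s ^ 2)) ^ N * D) := by
          apply mul_le_mul hGw hprod (Finset.prod_nonneg fun i _ => norm_nonneg _)
          positivity
  have : ‖g w‖ ≤ s ^ N * M * (2 * r / (r ^ 2 + s ^ 2)) ^ N := by
    rw [← mul_le_mul_iff_left₀ hDpos']
    calc ‖g w‖ * D ≤ (s ^ N * M) * ((2 * r / (r ^ 2 + s ^ 2)) ^ N * D) := hfinal
      _ = s ^ N * M * (2 * r / (r ^ 2 + s ^ 2)) ^ N * D := by ring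
  calc ‖g w‖ ≤ s ^ N * M * (2 * r / (r ^ 2 + s ^ 2)) ^ N := this
    _ = M * (2 * r * s / (r ^ 2 + s ^ 2)) ^ N := by
        rw [div_pow, div_pow, ← mul_div_assoc]
        ring
end
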